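/- Let T : X ⇉ X be union nonexpansive with strong fixed point x*, let (λ_n) ⊆ (0,1] with liminf λ_n(1−λ_n) > 0, and let r := r(x*;T). If x_0 lies in the open ball of radius r around x* and x_{n+1} ∈ (1−λ_n)x_n + λ_n T(x_n) for all n, then (x_n) converges to a point x̄ ∈ Fix T with ‖x̄ − x*‖ ≤ r. -/

import Mathlib

open Filter Topology ENNReal

/-- Outer semicontinuity of an index-valued map `φ : X ⇉ I` (finite discrete `I`). -/
def OSCIdx {X I : Type*} [TopologicalSpace X] (φ : X → Set I) : Prop :=
  ∀ (x : X) (i : I) (xn : ℕ → X),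
    Tendsto xn atTop (nhds x) → (∀ n, i ∈ φ (xn n)) → i ∈ φ x

/-- `S : X → X` is nonexpansive. -/
def Nonexpansive {X : Type*} [NormedAddCommGroup X] (S : X → X) : Prop :=
  ∀ x y : X, ‖S x - S y‖ ≤ ‖x - y‖

/-- The radius of attraction `r(x*;T) = sup{δ > 0 : φ(x) ⊆ φ(x*) ∀ x ∈ B(x*;δ)}`,
as an element of `(0,+∞]` (modeled in `ℝ≥0∞`, with the closed ball described by
`edist x x* ≤ δ`). -/
noncomputable def attractRadius {X I : Type*} [PseudoEMetricSpace X]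
    (φ : X → Set I) (xs : X) : ℝ≥0∞ :=
  sSup {δ : ℝ≥0∞ | 0 < δ ∧ ∀ x : X, edist x xs ≤ δ → φ x ⊆ φ xs}

lemma normsq_combo {X : Type*} [NormedAddCommGroup X] [InnerProductSpace ℝ X] (t : ℝ) (u v : X) :
    ‖(1-t)•u + t•v‖^2 = (1-t)*‖u‖^2 + t*‖v‖^2 - t*(1-t)*‖u-v‖^2 := by
  have h1 : ‖(1-t)•u + t•v‖^2 = ‖(1-t)•u‖^2 + 2 * inner ℝ ((1-t)•u) (t•v) + ‖t•v‖^2 :=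
    norm_add_sq_real _ _
  have h2 : ‖u - v‖^2 = ‖u‖^2 - 2*inner ℝ u v + ‖v‖^2 := norm_sub_sq_real u v
  have e1 : ‖(1-t)•u‖^2 = (1-t)^2*‖u‖^2 := by
    rw [norm_smul, mul_pow, Real.norm_eq_abs, sq_abs]
  have e2 : ‖t•v‖^2 = t^2*‖v‖^2 := by
    rw [norm_smul, mul_pow, Real.norm_eq_abs, sq_abs]
  have e3 : (inner ℝ ((1-t)•u) (t•v) : ℝ) = (1-t)*t*(inner ℝ u v : ℝ) := by
    rw [real_inner_smul_left, real_inner_smul_right]; ring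
  rw [h1, e1, e2, e3]
  linear_combination (t*(1-t)) * h2

/-- Local convergence of union nonexpansive iterations: if `T` is union
nonexpansive with strong fixed point `x*`, `(λ_n) ⊆ (0,1]` with
`liminf λ_n(1−λ_n) > 0`, `x_0` in the open ball of radius `r := r(x*;T)` about `x*`
and `x_{n+1} ∈ (1−λ_n)x_n + λ_n T(x_n)`, then `(x_n)` converges to some
`x̄ ∈ Fix T` with `‖x̄ − x*‖ ≤ r`. -/
theorem stmt_11 {X I : Type*}
    [NormedAddCommGroup X] [InnerProductSpace ℝ X] [FiniteDimensional ℝ X]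
    [Fintype I] [Nonempty I]
    (Ts : I → X → X) (hTs : ∀ i, Nonexpansive (Ts i))
    (φ : X → Set I) (hφ : OSCIdx φ) (hne : ∀ x, (φ x).Nonempty)
    (T : X → Set X) (hT : ∀ x, T x = {y | ∃ i ∈ φ x, y = Ts i x})
    (xs : X) (hxs : T xs = {xs})
    (lam : ℕ → ℝ) (hlam : ∀ n, lam n ∈ Set.Ioc (0 : ℝ) 1)
    (hliminf : 0 < Filter.atTop.liminf fun n => lam n * (1 - lam n))
    (x : ℕ → X) (hx0 : edist (x 0) xs < attractRadius φ xs)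
    (hrec : ∀ n, ∃ z ∈ T (x n), x (n + 1) = (1 - lam n) • x n + lam n • z) :
    ∃ xb : X, xb ∈ T xb ∧ edist xb xs ≤ attractRadius φ xs ∧
      Tendsto x atTop (nhds xb) := by
  classical
  -- extract z, idx
  choose z hz hxr using hrec
  have hz' : ∀ n, ∃ i ∈ φ (x n), z n = Ts i (x n) := by
    intro n
    have := hz n
    rw [hT] at this
    exact this
  choose idx hidx hzi using hz'
  -- strong fixed point
  have hfix : ∀ i ∈ φ xs, Ts i xs = xs := by
    intro i hi
    have : Ts i xs ∈ T xs := by rw [hT]; exact ⟨i, hi, rfl⟩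
    rw [hxs] at this
    exact this
  -- extract δ
  have hx0' : edist (x 0) xs <
      sSup {δ : ℝ≥0∞ | 0 < δ ∧ ∀ y : X, edist y xs ≤ δ → φ y ⊆ φ xs} := hx0
  obtain ⟨δ, ⟨hδpos, hδ⟩, hx0δ⟩ := lt_sSup_iff.mp hx0'
  set a : ℕ → ℝ := fun n => ‖x n - xs‖ with ha
  have hedist : ∀ y : X, ‖y - xs‖ ≤ a 0 → edist y xs ≤ δ := by
    intro y hy
    calc edist y xs = (‖y - xs‖₊ : ℝ≥0∞) := by rw [edist_nndist, nndist_eq_nnnorm]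
      _ ≤ (‖x 0 - xs‖₊ : ℝ≥0∞) := by
          exact_mod_cast hy
      _ = edist (x 0) xs := by rw [edist_nndist, nndist_eq_nnnorm]
      _ ≤ δ := le_of_lt hx0δ
  have hsubφ : ∀ n, a n ≤ a 0 → φ (x n) ⊆ φ xs := fun n h => hδ _ (hedist _ h)
  -- key one-step estimate
  have key : ∀ n (y : X), Ts (idx n) y = y → ‖x (n+1) - y‖ ≤ ‖x n - y‖ := by
    intro n y hy
    obtain ⟨hl0, hl1⟩ := hlam n
    have hc : x (n+1) - y = (1 - lam n) • (x n - y) + lam n • (z n - y) := by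
      rw [hxr n]; module
    have hzy : ‖z n - y‖ ≤ ‖x n - y‖ := by
      rw [hzi n]
      calc ‖Ts (idx n) (x n) - y‖ = ‖Ts (idx n) (x n) - Ts (idx n) y‖ := by rw [hy]
        _ ≤ ‖x n - y‖ := hTs _ _ _
    calc ‖x (n+1) - y‖ = ‖(1 - lam n) • (x n - y) + lam n • (z n - y)‖ := by rw [hc]
      _ ≤ ‖(1 - lam n) • (x n - y)‖ + ‖lam n • (z n - y)‖ := norm_add_le _ _
      _ = (1 - lam n) * ‖x n - y‖ + lam n * ‖z n - y‖ := by
          rw [norm_smul, norm_smul, Real.norm_eq_abs, Real.norm_eq_abs,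
            abs_of_nonneg (by linarith), abs_of_nonneg (by linarith)]
      _ ≤ ‖x n - y‖ := by nlinarith
  -- Fejér monotone w.r.t. xs
  have hstep' : ∀ n, a n ≤ a 0 → a (n+1) ≤ a n :=
    fun n ih => key n xs (hfix _ (hsubφ n ih (hidx n)))
  have hP : ∀ n, a n ≤ a 0 := by
    intro n
    induction n with
    | zero => exact le_refl _
    | succ n ih => exact (hstep' n ih).trans ih
  have hstep : ∀ n, a (n+1) ≤ a n := fun n => hstep' n (hP n)
  -- squared decrease
  have hsq : ∀ n, a (n+1)^2 ≤ a n ^ 2 - lam n * (1 - lam n) * ‖x n - z n‖^2 := by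
    intro n
    obtain ⟨hl0, hl1⟩ := hlam n
    have hc : x (n+1) - xs = (1 - lam n) • (x n - xs) + lam n • (z n - xs) := by
      rw [hxr n]; module
    have hd : (x n - xs) - (z n - xs) = x n - z n := by abel
    have hcombo := normsq_combo (lam n) (x n - xs) (z n - xs)
    rw [hd] at hcombo
    have hzy : ‖z n - xs‖ ≤ ‖x n - xs‖ := by
      rw [hzi n]
      have hfx := hfix _ (hsubφ n (hP n) (hidx n))
      calc ‖Ts (idx n) (x n) - xs‖ = ‖Ts (idx n) (x n) - Ts (idx n) xs‖ := by rw [hfx]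
        _ ≤ ‖x n - xs‖ := hTs _ _ _
    have : a (n+1) ^ 2 = (1 - lam n)*‖x n - xs‖^2 + lam n*‖z n - xs‖^2
        - lam n*(1 - lam n)*‖x n - z n‖^2 := by
      rw [ha]; simp only; rw [hc, hcombo]
    rw [this]
    have h1 : lam n * ‖z n - xs‖^2 ≤ lam n * ‖x n - xs‖^2 := by
      apply mul_le_mul_of_nonneg_left _ (le_of_lt hl0)
      exact pow_le_pow_left₀ (norm_nonneg _) hzy 2
    have : a n ^ 2 = ‖x n - xs‖^2 := rfl
    nlinarith
  -- a^2 converges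
  have hanonneg : ∀ n, 0 ≤ a n := fun n => norm_nonneg _
  have hA : Antitone (fun n => a n ^ 2) := by
    apply antitone_nat_of_succ_le
    intro n
    exact pow_le_pow_left₀ (hanonneg _) (hstep n) 2
  have hbdd : BddBelow (Set.range fun n => a n ^ 2) :=
    ⟨0, by rintro r ⟨n, rfl⟩; positivity⟩
  have hL : Tendsto (fun n => a n ^ 2) atTop (𝓝 (⨅ n, a n ^ 2)) :=
    tendsto_atTop_ciInf hA hbdd
  have hdiff : Tendsto (fun n => a n ^ 2 - a (n+1) ^ 2) atTop (𝓝 0) := by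
    have h2 : Tendsto (fun n => a (n+1) ^ 2) atTop (𝓝 (⨅ n, a n ^ 2)) :=
      hL.comp (tendsto_add_atTop_nat 1)
    simpa using hL.sub h2
  -- liminf
  set c := Filter.atTop.liminf fun n => lam n * (1 - lam n) with hcdef
  have hbdd2 : IsBoundedUnder (· ≥ ·) atTop (fun n => lam n * (1 - lam n)) := by
    refine isBoundedUnder_of ⟨0, fun n => ?_⟩
    obtain ⟨hl0, hl1⟩ := hlam n
    nlinarith
  have hev : ∀ᶠ n in atTop, c/2 < lam n * (1 - lam n) :=
    eventually_lt_of_lt_liminf (by linarith : c/2 < c) hbdd2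
  -- ‖x n - z n‖ → 0
  have hsq0 : Tendsto (fun n => ‖x n - z n‖^2) atTop (𝓝 0) := by
    have hub : ∀ᶠ n in atTop, ‖x n - z n‖^2 ≤ (2/c) * (a n ^ 2 - a (n+1) ^ 2) := by
      filter_upwards [hev] with n hn
      have h1 : lam n * (1 - lam n) * ‖x n - z n‖^2 ≤ a n ^ 2 - a (n+1) ^ 2 := by
        have := hsq n; linarith
      have h2 : c/2 * ‖x n - z n‖^2 ≤ a n ^ 2 - a (n+1) ^ 2 := by
        nlinarith [sq_nonneg ‖x n - z n‖]
      have h3 : (0:ℝ) < 2/c := by positivity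
      calc ‖x n - z n‖^2 = (2/c) * (c/2 * ‖x n - z n‖^2) := by field_simp
        _ ≤ (2/c) * (a n ^ 2 - a (n+1) ^ 2) := by
            exact mul_le_mul_of_nonneg_left h2 (le_of_lt h3)
    have hg : Tendsto (fun n => (2/c) * (a n ^ 2 - a (n+1) ^ 2)) atTop (𝓝 0) := by
      simpa using hdiff.const_mul (2/c)
    exact squeeze_zero' (Eventually.of_forall fun n => by positivity) hub hg
  have hxz : Tendsto (fun n => ‖x n - z n‖) atTop (𝓝 0) := by
    have := hsq0.sqrt
    simpa [Real.sqrt_sq (norm_nonneg _)] using this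
  -- cluster point
  have hbd : ∀ n, x n ∈ Metric.closedBall xs (a 0) := by
    intro n
    simpa [Metric.mem_closedBall, dist_eq_norm] using hP n
  obtain ⟨xb, -, g, hg, hgx⟩ :=
    tendsto_subseq_of_bounded Metric.isBounded_closedBall hbd
  -- φ locally inside φ(xb)
  have hρ1 : ∃ ρ1 > 0, ∀ y : X, dist y xb ≤ ρ1 → φ y ⊆ φ xb := by
    by_contra h
    push_neg at h
    have h' : ∀ n : ℕ, ∃ p : X × I,
        dist p.1 xb ≤ 1/(n+1) ∧ p.2 ∈ φ p.1 ∧ p.2 ∉ φ xb := by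
      intro n
      obtain ⟨y, hy1, hy2⟩ := h (1/(n+1)) (by positivity)
      obtain ⟨i, hi1, hi2⟩ := Set.not_subset.mp hy2
      exact ⟨(y, i), hy1, hi1, hi2⟩
    choose p h1 h2 h3 using h'
    have hpig : ∃ i : I, ∃ᶠ n in atTop, (p n).2 = i := by
      by_contra hh
      push_neg at hh
      have : ∀ᶠ n in atTop, ∀ i : I, (p n).2 ≠ i :=
        eventually_all.mpr fun i => hh i
      obtain ⟨n, hn⟩ := this.exists
      exact hn _ rfl
    obtain ⟨i, hfreq⟩ := hpig
    obtain ⟨g', hg', hgi⟩ := extraction_of_frequently_atTop hfreq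
    have htend : Tendsto (fun k => (p (g' k)).1) atTop (𝓝 xb) := by
      rw [tendsto_iff_dist_tendsto_zero]
      apply squeeze_zero (fun k => dist_nonneg)
        (fun k => (h1 (g' k)).trans ?_) tendsto_one_div_add_atTop_nhds_zero_nat
      have hk : k ≤ g' k := hg'.le_apply
      have : (k:ℝ) + 1 ≤ (g' k : ℝ) + 1 := by exact_mod_cast Nat.succ_le_succ hk
      apply one_div_le_one_div_of_le (by positivity) this
    have : i ∈ φ xb := hφ xb i _ htend (fun k => by rw [← hgi k]; exact h2 (g' k))
    exact h3 (g' 0) (hgi 0 ▸ this)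
  obtain ⟨ρ1, hρ1pos, hρ1⟩ := hρ1
  -- separation of non-fixed indices at xb
  have hε0 : ∃ ε0 > 0, ∀ i : I, ‖Ts i xb - xb‖ < ε0 → Ts i xb = xb := by
    set F : Finset I := Finset.univ.filter (fun i => Ts i xb ≠ xb) with hF
    by_cases hFne : F.Nonempty
    · refine ⟨(F.image fun i => ‖Ts i xb - xb‖).min' (hFne.image _), ?_, ?_⟩
      · obtain ⟨i, hiF, hie⟩ := Finset.mem_image.mp
          ((F.image fun i => ‖Ts i xb - xb‖).min'_mem (hFne.image _))
        rw [← hie]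
        have : Ts i xb ≠ xb := (Finset.mem_filter.mp hiF).2
        exact norm_pos_iff.mpr (sub_ne_zero_of_ne this)
      · intro i hi
        by_contra hne
        have hiF : i ∈ F := Finset.mem_filter.mpr ⟨Finset.mem_univ _, hne⟩
        have : (F.image fun i => ‖Ts i xb - xb‖).min' (hFne.image _) ≤ ‖Ts i xb - xb‖ :=
          Finset.min'_le _ _ (Finset.mem_image_of_mem _ hiF)
        linarith
    · refine ⟨1, one_pos, fun i _ => ?_⟩
      by_contra hne
      exact hFne ⟨i, Finset.mem_filter.mpr ⟨Finset.mem_univ _, hne⟩⟩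
  obtain ⟨ε0, hε0pos, hε0⟩ := hε0
  set ρ := min ρ1 (ε0/8) with hρdef
  have hρpos : 0 < ρ := lt_min hρ1pos (by positivity)
  obtain ⟨N1, hN1⟩ := eventually_atTop.mp (Tendsto.eventually_lt_const hρpos hxz)
  -- trapping
  have htrap : ∀ n, N1 ≤ n → ‖x n - xb‖ ≤ ρ →
      (idx n ∈ φ xb ∧ Ts (idx n) xb = xb ∧ ‖x (n+1) - xb‖ ≤ ‖x n - xb‖) := by
    intro n hn hxn
    have hiφ : idx n ∈ φ xb := by
      apply hρ1 (x n) _ (hidx n)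
      rw [dist_eq_norm]
      exact hxn.trans (min_le_left _ _)
    have hsmall : ‖Ts (idx n) xb - xb‖ < ε0 := by
      have e1 : ‖Ts (idx n) xb - Ts (idx n) (x n)‖ ≤ ‖xb - x n‖ := hTs _ _ _
      have e2 : ‖Ts (idx n) (x n) - x n‖ < ρ := by
        rw [← hzi n, ← norm_sub_rev]
        exact hN1 n hn
      have e3 : ‖xb - x n‖ ≤ ρ := by rw [norm_sub_rev]; exact hxn
      have hρε : ρ ≤ ε0/8 := min_le_right _ _
      calc ‖Ts (idx n) xb - xb‖
          ≤ ‖Ts (idx n) xb - Ts (idx n) (x n)‖ + ‖Ts (idx n) (x n) - x n‖ + ‖x n - xb‖ := by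
            have := norm_sub_le_norm_sub_add_norm_sub (Ts (idx n) xb) (Ts (idx n) (x n)) xb
            calc ‖Ts (idx n) xb - xb‖
                ≤ ‖Ts (idx n) xb - Ts (idx n) (x n)‖ + ‖Ts (idx n) (x n) - xb‖ :=
                  norm_sub_le_norm_sub_add_norm_sub _ _ _
              _ ≤ ‖Ts (idx n) xb - Ts (idx n) (x n)‖
                  + (‖Ts (idx n) (x n) - x n‖ + ‖x n - xb‖) := by
                  linarith [norm_sub_le_norm_sub_add_norm_sub (Ts (idx n) (x n)) (x n) xb]
              _ = _ := by ring
        _ < ρ + ρ + ρ := by linarith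
        _ ≤ ε0/8 + ε0/8 + ε0/8 := by linarith
        _ < ε0 := by linarith
    have hfxb := hε0 _ hsmall
    exact ⟨hiφ, hfxb, key n xb hfxb⟩
  -- find entry time
  have hM : ∃ k, N1 ≤ g k ∧ ‖x (g k) - xb‖ ≤ ρ := by
    have h1 : ∀ᶠ k in atTop, ‖(x ∘ g) k - xb‖ ≤ ρ := by
      have := Tendsto.eventually_lt_const hρpos
        (show Tendsto (fun k => ‖(x ∘ g) k - xb‖) atTop (𝓝 0) by
          simpa using (hgx.sub_const xb).norm)
      filter_upwards [this] with k hk using le_of_lt hk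
    have h2 : ∀ᶠ k in atTop, N1 ≤ g k :=
      eventually_atTop.mpr ⟨N1, fun k hk => hk.trans (hg.le_apply)⟩
    obtain ⟨k, hk1, hk2⟩ := (h2.and h1).exists
    exact ⟨k, hk1, hk2⟩
  obtain ⟨K, hKN, hKρ⟩ := hM
  set M := g K with hMdef
  have hball : ∀ n, M ≤ n → ‖x n - xb‖ ≤ ρ := by
    intro n hn
    induction n, hn using Nat.le_induction with
    | base => exact hKρ
    | succ n hn ih => exact ((htrap n (hKN.trans hn) ih).2.2).trans ih
  have hmono2 : ∀ m n, M ≤ m → m ≤ n → ‖x n - xb‖ ≤ ‖x m - xb‖ := by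
    intro m n hMm hmn
    induction n, hmn using Nat.le_induction with
    | base => exact le_refl _
    | succ n hmn ih =>
      exact ((htrap n (hKN.trans (hMm.trans hmn)) (hball n (hMm.trans hmn))).2.2).trans ih
  refine ⟨xb, ?_, ?_, ?_⟩
  · -- xb ∈ T xb
    obtain ⟨hiφ, hfxb, -⟩ := htrap M hKN (hball M (le_refl _))
    rw [hT]
    exact ⟨idx M, hiφ, hfxb.symm⟩
  · -- edist bound
    have hlim : ‖xb - xs‖ ≤ a 0 := by
      have ht : Tendsto (fun k => ‖(x ∘ g) k - xs‖) atTop (𝓝 ‖xb - xs‖) :=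
        (hgx.sub_const xs).norm
      exact le_of_tendsto ht (Eventually.of_forall fun k => hP (g k))
    calc edist xb xs = (‖xb - xs‖₊ : ℝ≥0∞) := by rw [edist_nndist, nndist_eq_nnnorm]
      _ ≤ (‖x 0 - xs‖₊ : ℝ≥0∞) := by exact_mod_cast hlim
      _ = edist (x 0) xs := by rw [edist_nndist, nndist_eq_nnnorm]
      _ ≤ attractRadius φ xs := le_of_lt hx0
  · -- convergence
    rw [Metric.tendsto_atTop]
    intro ε hε
    have h1 : ∀ᶠ k in atTop, dist ((x ∘ g) k) xb < ε :=
      eventually_atTop.mpr (Metric.tendsto_atTop.mp hgx ε hε)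
    have h2 : ∀ᶠ k in atTop, M ≤ g k :=
      eventually_atTop.mpr ⟨M, fun k hk => hk.trans hg.le_apply⟩
    obtain ⟨k, hk1, hk2⟩ := (h2.and h1).exists
    refine ⟨g k, fun n hn => ?_⟩
    have hm : ‖x n - xb‖ ≤ ‖x (g k) - xb‖ := hmono2 (g k) n hk1 hn
    have hk2' : ‖x (g k) - xb‖ < ε := by
      simpa [dist_eq_norm] using hk2
    rw [dist_eq_norm]
    linarith
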